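/- Let Y : ℝ → ℝ be continuous and let θ : ℝ → ℝ be differentiable with θ'(t) = Proj(θ(t), Y(t)) for all t ≥ 0. If h(θ(0)) ≤ 1, then h(θ(t)) ≤ 1 for all t ≥ 0; equivalently, the set Ω_θ = {θ ∈ ℝ : h(θ) ≤ 1} is forward invariant under the projection-based adaptation law. -/

import Mathlib

/-- The convex function `h(θ) = ((θ − θmin − ε)(θ − θmax + ε)) / ((θmax − θmin − ε)·ε)`. -/
noncomputable def hFun (θmin θmax ε θ : ℝ) : ℝ :=
  ((θ - θmin - ε) * (θ - θmax + ε)) / ((θmax - θmin - ε) * ε)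

/-- The projection operator `Proj(θ, Y)`. -/
noncomputable def projOp (θmin θmax ε θ Y : ℝ) : ℝ :=
  if 0 < hFun θmin θmax ε θ ∧ 0 < Y * deriv (hFun θmin θmax ε) θ then
    Y - Y * hFun θmin θmax ε θ
  else Y

/-- Explicit derivative of `hFun`. -/
noncomputable def hDer (θmin θmax ε θ : ℝ) : ℝ :=
  ((θ - θmax + ε) + (θ - θmin - ε)) / ((θmax - θmin - ε) * ε)

lemma hFun_hasDerivAt (θmin θmax ε θ : ℝ) :
    HasDerivAt (hFun θmin θmax ε) (hDer θmin θmax ε θ) θ := by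
  have h1 : HasDerivAt (fun x : ℝ => (x - θmin - ε) * (x - θmax + ε))
      (1 * (θ - θmax + ε) + (θ - θmin - ε) * 1) θ := by
    have ha : HasDerivAt (fun x : ℝ => x - θmin - ε) 1 θ :=
      ((hasDerivAt_id θ).sub_const θmin).sub_const ε
    have hb : HasDerivAt (fun x : ℝ => x - θmax + ε) 1 θ :=
      ((hasDerivAt_id θ).sub_const θmax).add_const ε
    exact ha.mul hb
  have := h1.div_const ((θmax - θmin - ε) * ε)
  exact this.congr_deriv (by unfold hDer; ring)

lemma deriv_hFun (θmin θmax ε θ : ℝ) :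
    deriv (hFun θmin θmax ε) θ = hDer θmin θmax ε θ :=
  (hFun_hasDerivAt θmin θmax ε θ).deriv

lemma key_bound (θmin θmax ε θ Y : ℝ) (h1 : 1 ≤ hFun θmin θmax ε θ) :
    hDer θmin θmax ε θ * projOp θmin θmax ε θ Y ≤ 0 := by
  unfold projOp
  rw [deriv_hFun]
  split_ifs with hc
  · obtain ⟨hpos, hYd⟩ := hc
    nlinarith [hYd, h1]
  · push_neg at hc
    have hYd : Y * hDer θmin θmax ε θ ≤ 0 := hc (by linarith)
    linarith [hYd]

/-- If `θ` is differentiable with `θ'(t) = Proj(θ(t), Y(t))` for all `t ≥ 0`, `Y` is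
continuous, and `h(θ(0)) ≤ 1`, then `h(θ(t)) ≤ 1` for all `t ≥ 0`:
the set `Ω_θ = {θ : h(θ) ≤ 1}` is forward invariant under the adaptation law. -/
theorem proj_forward_invariant (θmin θmax ε : ℝ) (hlt : θmin < θmax)
    (hε0 : 0 < ε) (hε : ε < (θmax - θmin) / 2)
    (Y θ : ℝ → ℝ) (hY : Continuous Y)
    (hθ : ∀ t ≥ (0:ℝ), HasDerivAt θ (projOp θmin θmax ε (θ t) (Y t)) t)
    (h0 : hFun θmin θmax ε (θ 0) ≤ 1) :
    ∀ t ≥ (0:ℝ), hFun θmin θmax ε (θ t) ≤ 1 := by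
  intro t ht
  set g : ℝ → ℝ := fun s => hFun θmin θmax ε (θ s) with hg
  set g' : ℝ → ℝ := fun s => hDer θmin θmax ε (θ s) * projOp θmin θmax ε (θ s) (Y s) with hg'
  have hgd : ∀ s ∈ Set.Icc (0:ℝ) t, HasDerivAt g (g' s) s := by
    intro s hs
    exact (hFun_hasDerivAt θmin θmax ε (θ s)).comp s (hθ s hs.1)
  have hgc : ContinuousOn g (Set.Icc (0:ℝ) t) := fun s hs =>
    (hgd s hs).continuousAt.continuousWithinAt
  -- For each r > 0, compare with B x = 1 + r * x
  have key : ∀ r > (0:ℝ), g t ≤ 1 + r * t := by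
    intro r hr
    have hB : ∀ x : ℝ, HasDerivAt (fun x => 1 + r * x) r x := by
      intro x
      simpa using ((hasDerivAt_id x).const_mul r).const_add 1
    have := image_le_of_deriv_right_lt_deriv_boundary (f := g) (f' := g')
      (a := 0) (b := t) hgc
      (fun x hx => (hgd x ⟨hx.1, hx.2.le⟩).hasDerivWithinAt)
      (B := fun x => 1 + r * x) (B' := fun _ => r)
      (by simpa using h0) hB
      (fun x hx hfx => by
        have h1 : 1 ≤ g x := by rw [hfx]; nlinarith [hx.1, hr]
        have := key_bound θmin θmax ε (θ x) (Y x) h1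
        calc g' x ≤ 0 := this
          _ < r := hr)
    simpa using this (Set.right_mem_Icc.2 ht)
  -- let r → 0
  show g t ≤ 1
  by_contra hcon
  push_neg at hcon
  rcases eq_or_lt_of_le ht with h | h
  · rw [← h] at hcon; exact absurd h0 (not_le.2 hcon)
  · have hgt : 0 < g t - 1 := by linarith
    have hr : (g t - 1) / (2 * t) > 0 := by positivity
    have hk := key _ hr
    have heq : (g t - 1) / (2 * t) * t = (g t - 1) / 2 := by
      field_simp
    rw [heq] at hk
    linarith
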